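/- arXiv:2103.00377 — 2 statements merged into one kernel-verified Lean document; each statement's English description precedes it below -/
import Mathlib

section
/- Let G be a finite group with normal subgroups M and N such that M ≤ N, and let φ ∈ Irr(M) and θ ∈ Irr(N) satisfy θ = Ind^N_M φ. Then G_θ = N · G_φ and G_φ ∩ N = M. -/
noncomputable section

open CategoryTheory Pointwise

/-- `χ : G → ℂ` is an irreducible (complex) character of the group `G`, i.e. the character of
some simple finite-dimensional complex representation of `G`. -/
def IsIrrChar (G : Type) [Group G] (χ : G → ℂ) : Prop :=
  ∃ V : FDRep ℂ G, Simple V ∧ χ = FDRep.character V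

open Classical in
/-- The character of `L` induced from the (virtual) character `φ` of `K`,
given by the usual induction formula `Ind_K^L φ (g) = |K|⁻¹ ∑_{x ∈ L} φ°(x g x⁻¹)`. -/
def IndChar {G : Type} [Group G] (K L : Subgroup G) (φ : ↥K → ℂ) : ↥L → ℂ :=
  fun g => (Nat.card ↥K : ℂ)⁻¹ *
    ∑ᶠ x : ↥L, if h : (x : G) * ↑g * (x : G)⁻¹ ∈ K then φ ⟨(x : G) * ↑g * (x : G)⁻¹, h⟩ else 0

/-- The stabilizer in `G` of (the `G`-conjugation orbit of) a class function `φ` on the normal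
subgroup `K` of `G`. -/
def charStab {G : Type} [Group G] (K : Subgroup G) (hK : K.Normal) (φ : ↥K → ℂ) :
    Subgroup G where
  carrier := {g | ∀ (x : G) (hx : x ∈ K) (hx' : g * x * g⁻¹ ∈ K),
    φ ⟨g * x * g⁻¹, hx'⟩ = φ ⟨x, hx⟩}
  one_mem' := by
    intro x hx hx'
    have h1 : (⟨1 * x * 1⁻¹, hx'⟩ : ↥K) = ⟨x, hx⟩ := Subtype.ext (by group)
    rw [h1]
  mul_mem' := by
    rintro a b ha hb x hx hx'
    have hb' : b * x * b⁻¹ ∈ K := hK.conj_mem x hx b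
    have ha' : a * (b * x * b⁻¹) * a⁻¹ ∈ K := hK.conj_mem _ hb' a
    have key : (⟨a * b * x * (a * b)⁻¹, hx'⟩ : ↥K) = ⟨a * (b * x * b⁻¹) * a⁻¹, ha'⟩ :=
      Subtype.ext (by group)
    rw [key, ha _ hb' ha']
    exact hb x hx hb'
  inv_mem' := by
    rintro a ha x hx hx'
    have h2 : a * (a⁻¹ * x * a⁻¹⁻¹) * a⁻¹ ∈ K := hK.conj_mem _ hx' a
    have key : (⟨a * (a⁻¹ * x * a⁻¹⁻¹) * a⁻¹, h2⟩ : ↥K) = ⟨x, hx⟩ := Subtype.ext (by group)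
    have h3 := ha _ hx' h2
    rw [key] at h3
    exact h3.symm

/-- The irreducible character `φ` of the subgroup `K` of `G` extends to the (larger)
subgroup `L`: there is an irreducible character of `L` restricting to `φ` on `K`. -/
def CharExtends {G : Type} [Group G] (K L : Subgroup G) (φ : ↥K → ℂ) : Prop :=
  ∃ χ : ↥L → ℂ, IsIrrChar ↥L χ ∧ ∀ (g : G) (hK : g ∈ K) (hL : g ∈ L), χ ⟨g, hL⟩ = φ ⟨g, hK⟩


open CategoryTheory Limits

-- ===== generic category lemmas =====
lemma simple_of_equivalence {C D : Type*} [Category C] [Category D]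
    [HasZeroMorphisms C] [HasZeroMorphisms D]
    (e : C ≌ D) (X : C) [Simple X] : Simple (e.functor.obj X) := by
  constructor
  intro Y f mf
  have hg : Mono (e.inverse.map f ≫ e.unitInv.app X) := by
    haveI : Mono (e.inverse.map f) := inferInstance
    exact mono_comp _ _
  have hmapzero : e.inverse.map f = 0 ↔ f = 0 := e.inverse.map_eq_zero_iff
  have hczero : e.inverse.map f ≫ e.unitInv.app X = 0 ↔ e.inverse.map f = 0 := by
    constructor
    · intro w
      have := w =≫ e.unitIso.hom.app X
      simpa using this
    · intro w; rw [w, zero_comp]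
  have hiso : IsIso (e.inverse.map f ≫ e.unitInv.app X) ↔ IsIso f := by
    constructor
    · intro h
      haveI : IsIso (e.inverse.map f) := by
        have : e.inverse.map f = (e.inverse.map f ≫ e.unitInv.app X) ≫ e.unitIso.hom.app X := by
          simp
        rw [this]; infer_instance
      exact isIso_of_reflects_iso f e.inverse
    · intro h; infer_instance
  haveI : Simple ((𝟭 C).obj X) := ‹Simple X›
  rw [← hiso]
  rw [Simple.mono_isIso_iff_nonzero (e.inverse.map f ≫ e.unitInv.app X)]
  rw [ne_eq, hczero, hmapzero]

universe u

def resEquivalence (V : Type (u+1)) [LargeCategory V] {G H : MonCat.{u}} (f : G ⟶ H) (g : H ⟶ G)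
    (h1 : f ≫ g = 𝟙 G) (h2 : g ≫ f = 𝟙 H) : Action V H ≌ Action V G :=
  CategoryTheory.Equivalence.mk (Action.res V f.hom) (Action.res V g.hom)
    ((Action.resComp V g.hom f.hom ≪≫ eqToIso (by rw [← MonCat.hom_comp, h2, MonCat.hom_id]) ≪≫ Action.resId V).symm)
    (Action.resComp V f.hom g.hom ≪≫ eqToIso (by rw [← MonCat.hom_comp, h1, MonCat.hom_id]) ≪≫ Action.resId V)

-- ===== conjugate representations =====
def conjRep {H : Type} [Group H] (V : FDRep ℂ H) (e : H ≃* H) : FDRep ℂ H :=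
  (Action.res (FGModuleCat ℂ) e.toMonoidHom).obj V

lemma conjRep_char {H : Type} [Group H] (V : FDRep ℂ H) (e : H ≃* H) (h : H) :
    (conjRep V e).character h = V.character (e h) := rfl

lemma conjRep_simple {H : Type} [Group H] (V : FDRep ℂ H) (e : H ≃* H) [Simple V] :
    Simple (conjRep V e) := by
  have h1 : MonCat.ofHom e.toMonoidHom ≫ MonCat.ofHom e.symm.toMonoidHom
      = 𝟙 (MonCat.of H) := by ext x; simp
  have h2 : MonCat.ofHom e.symm.toMonoidHom ≫ MonCat.ofHom e.toMonoidHom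
      = 𝟙 (MonCat.of H) := by ext x; simp
  exact simple_of_equivalence (resEquivalence (FGModuleCat ℂ)
    (MonCat.ofHom e.toMonoidHom) (MonCat.ofHom e.symm.toMonoidHom) h1 h2) V

-- ===== ip : inner product of class functions =====
def ip (H : Type) [Group H] (f g : H → ℂ) : ℂ :=
  (Nat.card H : ℂ)⁻¹ * ∑ᶠ x : H, f x * g x⁻¹

open Classical in
lemma ip_char_orthonormal {H : Type} [Group H] [Finite H] (V W : FDRep ℂ H)
    [Simple V] [Simple W] :
    ip H V.character W.character = if Nonempty (V ≅ W) then 1 else 0 := by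
  classical
  letI : Fintype H := Fintype.ofFinite H
  have hcard : (Fintype.card H : ℂ) ≠ 0 := Nat.cast_ne_zero.2 Fintype.card_ne_zero
  letI : Invertible (Fintype.card H : ℂ) := invertibleOfNonzero hcard
  letI : Invertible (Nat.card H : ℂ) := invertibleOfNonzero (by exact_mod_cast Nat.card_pos.ne')
  have := FDRep.char_orthonormal V W
  rw [ip, finsum_eq_sum_of_fintype, this]

lemma ip_char_nat {H : Type} [Group H] [Finite H] (V W : FDRep ℂ H) :
    ∃ n : ℕ, ip H V.character W.character = (n : ℂ) := by
  classical
  letI : Fintype H := Fintype.ofFinite H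
  have hcard : (Fintype.card H : ℂ) ≠ 0 := Nat.cast_ne_zero.2 Fintype.card_ne_zero
  letI : Invertible (Fintype.card H : ℂ) := invertibleOfNonzero hcard
  refine ⟨Module.finrank ℂ (Representation.invariants
    (FDRep.of (Representation.linHom W.ρ V.ρ)).ρ), ?_⟩
  have h1 : ∀ g : H, V.character g * W.character g⁻¹
      = (FDRep.of (Representation.linHom W.ρ V.ρ)).character g := by
    intro g
    rw [FDRep.char_linHom, mul_comm]
  have h2 := FDRep.average_char_eq_finrank_invariants (FDRep.of (Representation.linHom W.ρ V.ρ))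
  rw [ip, Nat.card_eq_fintype_card, finsum_eq_sum_of_fintype]
  calc (Fintype.card H : ℂ)⁻¹ * ∑ x : H, V.character x * W.character x⁻¹
      = ⅟(Fintype.card H : ℂ) • ∑ x : H, (FDRep.of (Representation.linHom W.ρ V.ρ)).character x := by
        rw [smul_eq_mul, invOf_eq_inv _]
        congr 1
        exact Finset.sum_congr rfl fun x _ => h1 x
    _ = _ := by rw [← h2, smul_eq_mul, invOf_eq_inv, Nat.card_eq_fintype_card]


section CChar
variable {G : Type} [Group G] {M : Subgroup G}

/-- the conjugate of a class function on a normal subgroup -/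
def cchar (hM : M.Normal) (g : G) (φ : ↥M → ℂ) : ↥M → ℂ :=
  fun m => φ (@MulAut.conjNormal G _ M hM g m)

lemma cchar_apply (hM : M.Normal) (g : G) (φ : ↥M → ℂ) (m : ↥M) (h : g * ↑m * g⁻¹ ∈ M) :
    cchar hM g φ m = φ ⟨g * ↑m * g⁻¹, h⟩ := by
  exact congrArg φ (Subtype.ext (@MulAut.conjNormal_apply G _ M hM g m))

lemma cchar_one (hM : M.Normal) (φ : ↥M → ℂ) : cchar hM 1 φ = φ := by
  funext m
  rw [cchar_apply hM 1 φ m (by simpa using m.2)]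
  congr 1
  exact Subtype.ext (by group)

lemma cchar_cchar (hM : M.Normal) (a b : G) (φ : ↥M → ℂ) :
    cchar hM a (cchar hM b φ) = cchar hM (b * a) φ := by
  funext m
  rw [cchar_apply hM a _ m (hM.conj_mem _ m.2 a),
    cchar_apply hM b φ _ (hM.conj_mem _ (hM.conj_mem _ m.2 a) b),
    cchar_apply hM (b * a) φ m (hM.conj_mem _ m.2 (b * a))]
  congr 1
  exact Subtype.ext (by simp [mul_assoc])

lemma mem_charStab_iff (hM : M.Normal) (φ : ↥M → ℂ) (g : G) :
    g ∈ charStab M hM φ ↔ cchar hM g φ = φ := by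
  constructor
  · intro hg
    funext m
    rw [cchar_apply hM g φ m (hM.conj_mem _ m.2 g)]
    have := hg ↑m m.2 (hM.conj_mem _ m.2 g)
    simpa using this
  · intro hg x hx hx'
    have := congrFun hg ⟨x, hx⟩
    rw [cchar_apply hM g φ ⟨x, hx⟩ hx'] at this
    exact this

/-- the conjugate of a character is the character of the conjugate representation -/
lemma cchar_character (hM : M.Normal) (g : G) (V : FDRep ℂ ↥M) :
    cchar hM g V.character
      = (conjRep V (@MulAut.conjNormal G _ M hM g)).character := rfl

/-- conjugating by an element of `M` itself fixes any character -/
lemma cchar_coe (hM : M.Normal) (t : ↥M) (V : FDRep ℂ ↥M) :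
    cchar hM ↑t V.character = V.character := by
  funext m
  rw [cchar_apply hM ↑t _ m (hM.conj_mem _ m.2 ↑t)]
  have : (⟨↑t * ↑m * (↑t)⁻¹, hM.conj_mem _ m.2 ↑t⟩ : ↥M) = t * m * t⁻¹ := Subtype.ext rfl
  rw [this]
  exact FDRep.char_conj V m t
end CChar

section IndLemmas
variable {G : Type} [Group G] {M N : Subgroup G}

open Classical in
lemma sum_dite_mem [Fintype ↥M] [Fintype ↥N] (hMN : M ≤ N) (f : ↥M → ℂ) :
    ∑ n : ↥N, (if h : (n : G) ∈ M then f ⟨n, h⟩ else 0) = ∑ m : ↥M, f m := by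
  classical
  rw [← Finset.sum_subset (Finset.subset_univ (Finset.univ.image (Subgroup.inclusion hMN)))
    (fun n _ hn => by
      rw [dif_neg]
      intro h
      exact hn (Finset.mem_image.2 ⟨⟨n, h⟩, Finset.mem_univ _, rfl⟩))]
  rw [Finset.sum_image (fun a _ b _ h => Subgroup.inclusion_injective hMN h)]
  apply Finset.sum_congr rfl
  intro m _
  rw [dif_pos (show ((Subgroup.inclusion hMN m : ↥N) : G) ∈ M from m.2)]
  congr 1

open Classical in
lemma IndChar_apply [Fintype ↥N] (hM : M.Normal) (ψ : ↥M → ℂ) (n : ↥N) :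
    IndChar M N ψ n = (Nat.card ↥M : ℂ)⁻¹ *
      ∑ x : ↥N, (if h : (n : G) ∈ M
        then ψ ((@MulAut.conjNormal G _ M hM (↑x : G)) ⟨n, h⟩) else 0) := by
  classical
  rw [IndChar, finsum_eq_sum_of_fintype]
  congr 1
  apply Finset.sum_congr rfl
  intro x _
  by_cases h : (n : G) ∈ M
  · rw [dif_pos (hM.conj_mem _ h ↑x), dif_pos h]
    exact congrArg ψ (Subtype.ext (@MulAut.conjNormal_apply G _ M hM (↑x) ⟨n, h⟩).symm)
  · rw [dif_neg, dif_neg h]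
    intro hc
    apply h
    have : (n : G) = (↑x)⁻¹ * (↑x * ↑n * (↑x)⁻¹) * ((↑x)⁻¹)⁻¹ := by group
    rw [this]
    exact hM.conj_mem _ hc _

end IndLemmas

section Mackey
variable {G : Type} [Group G] {M N : Subgroup G}

open Classical in
lemma indchar_cchar [Fintype ↥N] (hM : M.Normal) (hN : N.Normal) (hMN : M ≤ N)
    (φ : ↥M → ℂ) (g : G) :
    cchar hN g (IndChar M N φ) = IndChar M N (cchar hM g φ) := by
  classical
  funext n
  have hmem : ((@MulAut.conjNormal G _ N hN g n : ↥N) : G) = g * ↑n * g⁻¹ :=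
    @MulAut.conjNormal_apply G _ N hN g n
  show IndChar M N φ (@MulAut.conjNormal G _ N hN g n) = _
  rw [IndChar_apply hM, IndChar_apply hM]
  congr 1
  rw [← Equiv.sum_comp (@MulAut.conjNormal G _ N hN g : MulAut ↥N).toEquiv
    (fun x : ↥N => if h : ((@MulAut.conjNormal G _ N hN g n : ↥N) : G) ∈ M
      then φ ((@MulAut.conjNormal G _ M hM (↑x : G)) ⟨_, h⟩) else 0)]
  apply Finset.sum_congr rfl
  intro x _
  simp only [MulEquiv.toEquiv_eq_coe, EquivLike.coe_coe]
  by_cases h : (n : G) ∈ M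
  · have h2 : ((@MulAut.conjNormal G _ N hN g n : ↥N) : G) ∈ M := by
      rw [hmem]; exact hM.conj_mem _ h g
    rw [dif_pos h2, dif_pos h]
    show φ _ = cchar hM g φ _
    rw [cchar_apply hM g φ _ (hM.conj_mem _ (hM.conj_mem _ h ↑x) g)]
    apply congrArg φ
    apply Subtype.ext
    show ((@MulAut.conjNormal G _ M hM (↑(@MulAut.conjNormal G _ N hN g x) : G))
      (⟨_, h2⟩ : ↥M) : G) = _
    rw [@MulAut.conjNormal_apply G _ M hM]
    have hx : ((@MulAut.conjNormal G _ N hN g x : ↥N) : G) = g * ↑x * g⁻¹ :=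
      @MulAut.conjNormal_apply G _ N hN g x
    rw [hx, hmem]
    show _ = g * ((@MulAut.conjNormal G _ M hM (↑x : G)) ⟨↑n, h⟩ : G) * g⁻¹
    rw [@MulAut.conjNormal_apply G _ M hM]
    group
  · have h2 : ¬ ((@MulAut.conjNormal G _ N hN g n : ↥N) : G) ∈ M := by
      rw [hmem]
      intro hc
      apply h
      have : (n : G) = g⁻¹ * (g * ↑n * g⁻¹) * (g⁻¹)⁻¹ := by group
      rw [this]
      exact hM.conj_mem _ hc _
    rw [dif_neg h2, dif_neg h]
end Mackey

section Mackey2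
variable {G : Type} [Group G] {M N : Subgroup G}

open Classical in
lemma mackey [Fintype ↥M] [Fintype ↥N] (hM : M.Normal) (hMN : M ≤ N) (ψ χ : ↥M → ℂ) :
    ip ↥N (IndChar M N ψ) (IndChar M N χ)
      = (Nat.card ↥M : ℂ)⁻¹ * ∑ t : ↥N, ip ↥M ψ (cchar hM (↑t : G) χ) := by
  classical
  set a : ℂ := (Nat.card ↥M : ℂ)⁻¹ with ha
  have hNcard : (Nat.card ↥N : ℂ) ≠ 0 := by
    exact_mod_cast Nat.card_pos.ne'
  -- the inner 3-variable summand
  set F : ↥N → ↥N → ↥M → ℂ :=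
    fun x y m => ψ ((@MulAut.conjNormal G _ M hM (↑x : G)) m)
      * χ ((@MulAut.conjNormal G _ M hM (↑y : G)) m⁻¹) with hF
  have step1 : ∀ n : ↥N, IndChar M N ψ n * IndChar M N χ n⁻¹
      = a * a * ∑ x : ↥N, ∑ y : ↥N,
          (if h : (n : G) ∈ M then F x y ⟨n, h⟩ else 0) := by
    intro n
    rw [IndChar_apply hM ψ n, IndChar_apply hM χ n⁻¹, mul_mul_mul_comm, Fintype.sum_mul_sum]
    congr 1
    apply Finset.sum_congr rfl; intro x _
    apply Finset.sum_congr rfl; intro y _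
    by_cases h : (n : G) ∈ M
    · have h' : ((n⁻¹ : ↥N) : G) ∈ M := by
        have : ((n⁻¹ : ↥N) : G) = (↑n)⁻¹ := rfl
        rw [this]; exact inv_mem h
      rw [dif_pos h, dif_pos h', dif_pos h]
      have : (⟨((n⁻¹ : ↥N) : G), h'⟩ : ↥M) = (⟨(n : G), h⟩ : ↥M)⁻¹ := Subtype.ext rfl
      rw [this]
    · have h' : ¬ ((n⁻¹ : ↥N) : G) ∈ M := by
        intro hc
        apply h
        have : (n : G) = (((n⁻¹ : ↥N) : G))⁻¹ := by simp
        rw [this]; exact inv_mem hc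
      rw [dif_neg h, dif_neg h', dif_neg h, zero_mul]
  have step2 : ∀ x : ↥N, ∑ y : ↥N, ∑ m : ↥M, F x y m
      = ∑ t : ↥N, ∑ m : ↥M, ψ m * χ ((@MulAut.conjNormal G _ M hM (↑t : G)) m⁻¹) := by
    intro x
    rw [← Equiv.sum_comp (Equiv.mulRight x) (fun y : ↥N => ∑ m : ↥M, F x y m)]
    apply Finset.sum_congr rfl
    intro t _
    calc ∑ m : ↥M, F x (Equiv.mulRight x t) m
        = ∑ m : ↥M, (fun w : ↥M => ψ w * χ ((@MulAut.conjNormal G _ M hM (↑t : G)) w⁻¹))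
            ((@MulAut.conjNormal G _ M hM (↑x : G)).toEquiv m) := by
          apply Finset.sum_congr rfl
          intro m _
          simp only [hF, Equiv.coe_mulRight, MulEquiv.toEquiv_eq_coe, EquivLike.coe_coe]
          congr 2
          have hco : ((t * x : ↥N) : G) = ↑t * ↑x := rfl
          rw [hco, map_mul]
          rw [MulAut.mul_apply]
          congr 1
          exact map_inv _ m
      _ = ∑ m : ↥M, ψ m * χ ((@MulAut.conjNormal G _ M hM (↑t : G)) m⁻¹) :=
          Equiv.sum_comp (@MulAut.conjNormal G _ M hM (↑x : G) : MulAut ↥M).toEquiv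
            (fun w : ↥M => ψ w * χ ((@MulAut.conjNormal G _ M hM (↑t : G)) w⁻¹))
  -- put it together
  rw [ip, finsum_eq_sum_of_fintype]
  have hmain : ∑ x : ↥N, IndChar M N ψ x * IndChar M N χ x⁻¹
      = a * a * ((Nat.card ↥N : ℂ) *
        ∑ t : ↥N, ∑ m : ↥M, ψ m * χ ((@MulAut.conjNormal G _ M hM (↑t : G)) m⁻¹)) := by
    calc ∑ n : ↥N, IndChar M N ψ n * IndChar M N χ n⁻¹
        = ∑ n : ↥N, (a * a * ∑ x : ↥N, ∑ y : ↥N,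
            (if h : (n : G) ∈ M then F x y ⟨n, h⟩ else 0)) :=
          Finset.sum_congr rfl fun n _ => step1 n
      _ = a * a * ∑ n : ↥N, ∑ x : ↥N, ∑ y : ↥N,
            (if h : (n : G) ∈ M then F x y ⟨n, h⟩ else 0) := by
          rw [Finset.mul_sum]
      _ = a * a * ∑ x : ↥N, ∑ n : ↥N, ∑ y : ↥N,
            (if h : (n : G) ∈ M then F x y ⟨n, h⟩ else 0) := by
          rw [Finset.sum_comm]
      _ = a * a * ∑ x : ↥N, ∑ y : ↥N, ∑ n : ↥N,
            (if h : (n : G) ∈ M then F x y ⟨n, h⟩ else 0) := by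
          congr 1
          exact Finset.sum_congr rfl fun x _ => Finset.sum_comm
      _ = a * a * ∑ x : ↥N, ∑ y : ↥N, ∑ m : ↥M, F x y m := by
          congr 1
          apply Finset.sum_congr rfl; intro x _
          apply Finset.sum_congr rfl; intro y _
          exact sum_dite_mem hMN (F x y)
      _ = a * a * ∑ x : ↥N, ∑ t : ↥N, ∑ m : ↥M,
            ψ m * χ ((@MulAut.conjNormal G _ M hM (↑t : G)) m⁻¹) := by
          congr 1
          exact Finset.sum_congr rfl fun x _ => step2 x
      _ = a * a * ((Nat.card ↥N : ℂ) * ∑ t : ↥N, ∑ m : ↥M,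
            ψ m * χ ((@MulAut.conjNormal G _ M hM (↑t : G)) m⁻¹)) := by
          rw [Finset.sum_const, nsmul_eq_mul, Nat.card_eq_fintype_card, Finset.card_univ]
  rw [hmain]
  have hip : ∀ t : ↥N, ip ↥M ψ (cchar hM (↑t : G) χ)
      = a * ∑ m : ↥M, ψ m * χ ((@MulAut.conjNormal G _ M hM (↑t : G)) m⁻¹) := by
    intro t
    rw [ip, finsum_eq_sum_of_fintype, ← ha]
    rfl
  rw [Finset.sum_congr rfl fun t _ => hip t, ← Finset.mul_sum]
  field_simp
end Mackey2

/-- Let `G` be a finite group with normal subgroups `M ≤ N`, and let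
`φ ∈ Irr(M)` and `θ ∈ Irr(N)` satisfy `θ = Ind^N_M φ`. Then `G_θ = N · G_φ` and
`G_φ ∩ N = M`. -/
theorem stabilizer_of_induced_char
    (G : Type) [Group G] [Fintype G]
    (M N : Subgroup G) (hM : M.Normal) (hN : N.Normal) (hMN : M ≤ N)
    (φ : ↥M → ℂ) (θ : ↥N → ℂ)
    (hφ : IsIrrChar ↥M φ) (hθ : IsIrrChar ↥N θ)
    (hind : θ = IndChar M N φ) :
    (charStab N hN θ : Set G) = (N : Set G) * (charStab M hM φ : Set G) ∧
      charStab M hM φ ⊓ N = M := by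
  classical
  obtain ⟨Vφ, hVφs, hVφ⟩ := hφ
  obtain ⟨Vθ, hVθs, hVθ⟩ := hθ
  haveI := hVφs; haveI := hVθs
  letI : Fintype ↥M := Fintype.ofFinite ↥M
  letI : Fintype ↥N := Fintype.ofFinite ↥N
  have hMcard : (Nat.card ↥M : ℂ) ≠ 0 := by exact_mod_cast Nat.card_pos.ne'
  have ipφφ : ip ↥M φ φ = 1 := by
    rw [hVφ, ip_char_orthonormal Vφ Vφ, if_pos ⟨Iso.refl _⟩]
  have ipθθ : ip ↥N θ θ = 1 := by
    rw [hVθ, ip_char_orthonormal Vθ Vθ, if_pos ⟨Iso.refl _⟩]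
  have hconj : ∀ s : G, cchar hM s φ
      = (conjRep Vφ (@MulAut.conjNormal G _ M hM s)).character := by
    intro s; rw [hVφ]; exact cchar_character hM s Vφ
  have hsimple : ∀ s : G, Simple (conjRep Vφ (@MulAut.conjNormal G _ M hM s)) :=
    fun s => conjRep_simple Vφ _
  have dicho : ∀ s t : G,
      ip ↥M (cchar hM s φ) (cchar hM t φ) = 0 ∨ cchar hM s φ = cchar hM t φ := by
    intro s t
    haveI := hsimple s; haveI := hsimple t
    by_cases h : Nonempty ((conjRep Vφ (@MulAut.conjNormal G _ M hM s))
        ≅ (conjRep Vφ (@MulAut.conjNormal G _ M hM t)))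
    · right; rw [hconj s, hconj t]; exact FDRep.char_iso h.some
    · left; rw [hconj s, hconj t, ip_char_orthonormal, if_neg h]
  have hφfix : ∀ m : ↥M, cchar hM (↑m) φ = φ := by
    intro m; rw [hVφ]; exact cchar_coe hM m Vφ
  have hθfix : ∀ n : ↥N, cchar hN (↑n) θ = θ := by
    intro n; rw [hVθ]; exact cchar_coe hN n Vθ
  have key : ∀ ψ : ↥M → ℂ, ip ↥N (IndChar M N ψ) θ
      = (Nat.card ↥M : ℂ)⁻¹ * ∑ t : ↥N, ip ↥M ψ (cchar hM (↑t : G) φ) := by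
    intro ψ; rw [hind]; exact mackey hM hMN ψ φ
  -- Part 2
  have hsum1 : ∑ t : ↥N, ip ↥M φ (cchar hM (↑t : G) φ) = (Nat.card ↥M : ℂ) := by
    have h1 := key φ
    rw [← hind, ipθθ] at h1
    field_simp at h1
    rw [Nat.card_eq_fintype_card] at h1 ⊢
    exact h1.symm
  have hterm : ∀ t : ↥N, ip ↥M φ (cchar hM (↑t : G) φ)
      = if cchar hM (↑t : G) φ = φ then 1 else 0 := by
    intro t
    by_cases h : cchar hM (↑t : G) φ = φ
    · rw [if_pos h, h, ipφφ]
    · rw [if_neg h]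
      rcases dicho 1 ↑t with h0 | he
      · rw [cchar_one] at h0; exact h0
      · exfalso; apply h; rw [cchar_one] at he; exact he.symm
  have hsum2 : ∑ t : ↥N, (if cchar hM (↑t : G) φ = φ then (1:ℂ) else 0)
      = (Nat.card ↥M : ℂ) := by
    rw [← hsum1]
    exact Finset.sum_congr rfl fun t _ => (hterm t).symm
  set T : Finset ↥N := Finset.univ.filter (fun t => cchar hM (↑t : G) φ = φ) with hT
  have hTcard : (T.card : ℂ) = (Nat.card ↥M : ℂ) := by
    rw [← hsum2, Finset.sum_boole]
  have hTcardNat : T.card = Fintype.card ↥M := by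
    have : (T.card : ℂ) = ((Fintype.card ↥M : ℕ) : ℂ) := by
      rw [hTcard, Nat.card_eq_fintype_card]
    exact_mod_cast this
  set im : Finset ↥N := Finset.univ.image (Subgroup.inclusion hMN) with him_def
  have him : im ⊆ T := by
    intro t ht
    obtain ⟨m, -, rfl⟩ := Finset.mem_image.1 ht
    rw [Finset.mem_filter]
    refine ⟨Finset.mem_univ _, ?_⟩
    have hco : ((Subgroup.inclusion hMN m : ↥N) : G) = (↑m : G) := rfl
    rw [hco]
    exact hφfix m
  have hTim : T = im := by
    refine (Finset.eq_of_subset_of_card_le him ?_).symm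
    rw [Finset.card_image_of_injective _ (Subgroup.inclusion_injective hMN),
      Finset.card_univ, hTcardNat]
  have part2 : charStab M hM φ ⊓ N = M := by
    ext g
    rw [Subgroup.mem_inf]
    constructor
    · rintro ⟨hstab, hgN⟩
      have ht : (⟨g, hgN⟩ : ↥N) ∈ T := Finset.mem_filter.2
        ⟨Finset.mem_univ _, (mem_charStab_iff hM φ g).1 hstab⟩
      rw [hTim] at ht
      obtain ⟨m, -, hm⟩ := Finset.mem_image.1 ht
      have hmg : (↑m : G) = g := congrArg Subtype.val hm
      rw [← hmg]
      exact m.2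
    · intro hg
      exact ⟨(mem_charStab_iff hM φ g).2 (hφfix ⟨g, hg⟩), hMN hg⟩
  refine ⟨?_, part2⟩
  ext g
  constructor
  · intro hgθ
    have h1 : cchar hN g θ = θ := (mem_charStab_iff hN θ g).1 hgθ
    have h2 : IndChar M N (cchar hM g φ) = θ := by
      calc IndChar M N (cchar hM g φ)
          = cchar hN g (IndChar M N φ) := (indchar_cchar hM hN hMN φ g).symm
        _ = cchar hN g θ := by rw [← hind]
        _ = θ := h1
    have h4 := key (cchar hM g φ)
    rw [h2, ipθθ] at h4
    have h5 : ∃ t : ↥N, ip ↥M (cchar hM g φ) (cchar hM (↑t : G) φ) ≠ 0 := by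
      by_contra hall
      push_neg at hall
      rw [Finset.sum_congr rfl (fun t _ => hall t)] at h4
      simp at h4
    obtain ⟨t, ht⟩ := h5
    have h6 : cchar hM g φ = cchar hM (↑t : G) φ := (dicho g ↑t).resolve_left ht
    have h7 : cchar hM (g * (↑t : G)⁻¹) φ = φ := by
      have h8 := congrArg (cchar hM ((↑t : G)⁻¹)) h6
      rw [cchar_cchar, cchar_cchar] at h8
      have e1 : (↑t : G) * (↑t : G)⁻¹ = 1 := by group
      rw [e1, cchar_one] at h8
      exact h8
    have hsmem : g * (↑t : G)⁻¹ ∈ charStab M hM φ := (mem_charStab_iff hM φ _).2 h7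
    have hnmem : (g * (↑t : G)⁻¹) * ↑t * (g * (↑t : G)⁻¹)⁻¹ ∈ N :=
      hN.conj_mem _ t.2 _
    refine Set.mem_mul.2 ⟨(g * (↑t : G)⁻¹) * ↑t * (g * (↑t : G)⁻¹)⁻¹, hnmem,
      g * (↑t : G)⁻¹, hsmem, ?_⟩
    group
  · intro hg
    obtain ⟨n, hn, s, hs, rfl⟩ := Set.mem_mul.1 hg
    have hn' : n ∈ N := hn
    have hs' : cchar hM s φ = φ := (mem_charStab_iff hM φ s).1 hs
    show n * s ∈ charStab N hN θ
    apply (mem_charStab_iff hN θ (n * s)).2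
    rw [← cchar_cchar hN s n θ]
    have hnθ : cchar hN n θ = θ := hθfix ⟨n, hn'⟩
    rw [hnθ]
    calc cchar hN s θ = cchar hN s (IndChar M N φ) := by rw [← hind]
      _ = IndChar M N (cchar hM s φ) := indchar_cchar hM hN hMN φ s
      _ = IndChar M N φ := by rw [hs']
      _ = θ := hind.symm
end
end

section
/- Let O be a complete discrete valuation ring with residue field k, let d be an integer, and let C be a bounded cochain complex of finitely generated free O-modules such that H^i(C) = 0 for all i ≠ d and H^i(C ⊗_O k) = 0 for all i ≠ d. Then H^d(C) is a finitely generated free O-module. -/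
noncomputable section

universe u v

open IsLocalRing Pointwise

/-- Let `O` be a complete discrete valuation ring with residue field `k`, let
`d` be an integer, and let `C` be a bounded cochain complex of finitely generated free
`O`-modules such that `H^i(C) = 0` for all `i ≠ d` and `H^i(C ⊗_O k) = 0` for all `i ≠ d`.
Then `H^d(C)` is a finitely generated free `O`-module.

The complex `C` is encoded by its components `X i` together with maps `dd i j : X i → X j`
which vanish unless `j = i + 1` (as in `Mathlib`'s `HomologicalComplex`); vanishing of the
`i`-th cohomology of a complex is encoded as exactness at the `i`-th spot, and `C ⊗_O k` is
obtained by base change along `O → k = O/𝔪`. -/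
theorem top_cohomology_finite_free_of_concentrated_cohomology
    (O : Type u) [CommRing O] [IsDomain O] [IsDiscreteValuationRing O]
    [IsAdicComplete (maximalIdeal O) O]
    (X : ℤ → Type v) [∀ i, AddCommGroup (X i)] [∀ i, Module O (X i)]
    [∀ i, Module.Free O (X i)] [∀ i, Module.Finite O (X i)]
    (dd : ∀ i j : ℤ, X i →ₗ[O] X j)
    (hshape : ∀ i j : ℤ, j ≠ i + 1 → dd i j = 0)
    (hdd : ∀ i j l : ℤ, (dd j l).comp (dd i j) = 0)
    (hbdd : ∃ a b : ℤ, (∀ i < a, Subsingleton (X i)) ∧ (∀ i, b < i → Subsingleton (X i)))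
    (d : ℤ)
    -- `H^i(C) = 0` for `i ≠ d`:
    (hO : ∀ i : ℤ, i ≠ d → Function.Exact (dd (i - 1) i) (dd i (i + 1)))
    -- `H^i(C ⊗_O k) = 0` for `i ≠ d`:
    (hk : ∀ i : ℤ, i ≠ d →
      Function.Exact ((dd (i - 1) i).baseChange (ResidueField O))
        ((dd i (i + 1)).baseChange (ResidueField O))) :
    -- `H^d(C) = ker(d^d) / im(d^{d-1})` is finitely generated and free over `O`:
    Module.Free O
      (↥(LinearMap.ker (dd d (d + 1))) ⧸
        (LinearMap.range (dd (d - 1) d)).comap (LinearMap.ker (dd d (d + 1))).subtype) ∧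
    Module.Finite O
      (↥(LinearMap.ker (dd d (d + 1))) ⧸
        (LinearMap.range (dd (d - 1) d)).comap (LinearMap.ker (dd d (d + 1))).subtype) := by
  classical
  obtain ⟨ϖ, hϖ⟩ := IsDiscreteValuationRing.exists_irreducible O
  have hϖmem : ϖ ∈ maximalIdeal O := by
    rw [IsLocalRing.mem_maximalIdeal]
    exact hϖ.not_isUnit
  -- key step: the cokernel of `dd (d-1) d` has no `ϖ`-torsion.
  have key : ∀ v : X d, ϖ • v ∈ LinearMap.range (dd (d - 1) d) →
      v ∈ LinearMap.range (dd (d - 1) d) := by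
    rintro v ⟨y, hy⟩
    have hex := hk (d - 1) (by omega)
    rw [show d - 1 + 1 = d by ring] at hex
    -- `1 ⊗ y` is a cocycle mod `𝔪`
    have h1 : (dd (d - 1) d).baseChange (ResidueField O) (1 ⊗ₜ[O] y) = 0 := by
      rw [LinearMap.baseChange_tmul, hy, TensorProduct.tmul_smul, TensorProduct.smul_tmul']
      have hz1 : ϖ • (1 : ResidueField O) = 0 := by
        rw [← Algebra.algebraMap_eq_smul_one]
        exact Ideal.Quotient.eq_zero_iff_mem.mpr hϖmem
      rw [hz1, TensorProduct.zero_tmul]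
    obtain ⟨t, ht⟩ := (hex _).mp h1
    -- every element of `k ⊗ M` is of the form `1 ⊗ z`
    obtain ⟨z, hz⟩ : ∃ z : X (d - 1 - 1), (1 : ResidueField O) ⊗ₜ[O] z = t := by
      obtain ⟨w, hw⟩ := Submodule.Quotient.mk_surjective _
        (TensorProduct.quotTensorEquivQuotSMul (X (d - 1 - 1)) (maximalIdeal O) t)
      exact ⟨w, by
        have := congrArg (TensorProduct.quotTensorEquivQuotSMul (X (d - 1 - 1))
          (maximalIdeal O)).symm hw
        rw [TensorProduct.quotTensorEquivQuotSMul_symm_mk] at this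
        exact this.trans (LinearEquiv.symm_apply_apply _ _)⟩
    -- hence `y - dd z ∈ 𝔪 • ⊤ = ϖ • ⊤`
    have h2 : (1 : ResidueField O) ⊗ₜ[O] (y - dd (d - 1 - 1) (d - 1) z) = 0 := by
      rw [TensorProduct.tmul_sub, ← ht, ← hz, LinearMap.baseChange_tmul, sub_self]
    have h3 : y - dd (d - 1 - 1) (d - 1) z
        ∈ (maximalIdeal O) • (⊤ : Submodule O (X (d - 1))) := by
      have h5 := congrArg (TensorProduct.quotTensorEquivQuotSMul (X (d - 1)) (maximalIdeal O)) h2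
      erw [map_zero] at h5
      rw [← Submodule.Quotient.mk_eq_zero, ← h5]
      have h4 : (1 : ResidueField O) = Ideal.Quotient.mk (maximalIdeal O) 1 := rfl
      rw [h4]; erw [TensorProduct.quotTensorEquivQuotSMul_mk_tmul, one_smul]
    rw [(IsDiscreteValuationRing.irreducible_iff_uniformizer ϖ).mp hϖ,
      Submodule.ideal_span_singleton_smul] at h3
    obtain ⟨w, -, hw⟩ := Set.mem_smul_set.mp h3
    -- conclude using `d ∘ d = 0` and torsion-freeness of `X d`
    have h6 : ϖ • v = ϖ • dd (d - 1) d w := by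
      have h7 : y = dd (d - 1 - 1) (d - 1) z + ϖ • w := by
        rw [hw]; abel
      have h8 := congrArg (dd (d - 1) d) h7
      rw [hy, map_add, map_smul] at h8
      have h9 : dd (d - 1) d (dd (d - 1 - 1) (d - 1) z) = 0 := by
        have := congrFun (congrArg DFunLike.coe (hdd (d - 1 - 1) (d - 1) d)) z
        simpa using this
      rw [h9, zero_add] at h8
      exact h8
    have h10 : v = dd (d - 1) d w := by
      have := smul_right_injective (X d) hϖ.ne_zero h6
      exact this
    exact ⟨w, h10.symm⟩
  -- iterate: no `ϖ ^ n`-torsion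
  have keyn : ∀ (n : ℕ) (v : X d), ϖ ^ n • v ∈ LinearMap.range (dd (d - 1) d) →
      v ∈ LinearMap.range (dd (d - 1) d) := by
    intro n
    induction n with
    | zero => intro v hv; simpa using hv
    | succ n ih =>
      intro v hv
      rw [pow_succ, mul_smul] at hv
      exact key v (ih _ hv)
  -- the cohomology module is torsion-free
  haveI : NoZeroSMulDivisors O
      (↥(LinearMap.ker (dd d (d + 1))) ⧸
        (LinearMap.range (dd (d - 1) d)).comap (LinearMap.ker (dd d (d + 1))).subtype) := by
    refine ⟨fun {a x} hax => ?_⟩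
    by_cases ha : a = 0
    · exact Or.inl ha
    · refine Or.inr ?_
      obtain ⟨xx, rfl⟩ := Submodule.Quotient.mk_surjective _ x
      rw [← Submodule.Quotient.mk_smul, Submodule.Quotient.mk_eq_zero] at hax
      rw [Submodule.Quotient.mk_eq_zero]
      obtain ⟨n, u, rfl⟩ := IsDiscreteValuationRing.eq_unit_mul_pow_irreducible ha hϖ
      have hax' : ((u : O) * ϖ ^ n) • (xx : X d) ∈ LinearMap.range (dd (d - 1) d) := hax
      have h11 : ϖ ^ n • (xx : X d) ∈ LinearMap.range (dd (d - 1) d) := by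
        have := Submodule.smul_mem _ ((u⁻¹ : Oˣ) : O) hax'
        rwa [← mul_smul, ← mul_assoc, Units.inv_mul, one_mul] at this
      exact keyn n _ h11
  constructor
  · exact Module.free_of_finite_type_torsion_free'
  · infer_instance
end
end
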